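/- arXiv:2206.08051 — 2 statements merged into one kernel-verified Lean document; each statement's English description precedes it below -/
import Mathlib

section
/- Let P ⊆ ℝⁿ be a fixed finite set of distinct generators and let K : ℝⁿ → ℝ≥0 be continuous, integrable, with K(0) > 0 and ∫_{ℝⁿ} K > 0. For h > 0, let f_h be the CVDE built on P with kernel K_h(p,x) = K((p − x)/h). Then, as h → 0, the probability measures f_h dx converge in distribution (weakly) to the empirical measure (1/|P|) Σ_{p ∈ P} δ_p, where δ_p is the Dirac measure at p. -/
open MeasureTheory Metric Set Filter

noncomputable section

/-- The Voronoi cell of a generator `p` w.r.t. the finite set of generators `P`. -/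
def cell {n : ℕ} (P : Finset (EuclideanSpace ℝ (Fin n))) (p : EuclideanSpace ℝ (Fin n)) :
    Set (EuclideanSpace ℝ (Fin n)) :=
  {x | ∀ q ∈ P, dist x p ≤ dist x q}

/-- A choice of a nearest generator (the generator of the cell containing `x`;
uniquely determined off the cell boundaries). -/
noncomputable def nearest {n : ℕ} (P : Finset (EuclideanSpace ℝ (Fin n)))
    (x : EuclideanSpace ℝ (Fin n)) : EuclideanSpace ℝ (Fin n) :=
  if h : P.Nonempty then (P.exists_min_image (fun p => dist x p) h).choose else 0

/-- The Compactified Voronoi Density Estimator: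
`f(x) = K(p,x) / (|P| · vol_p(C(x)))` where `p` is the generator of `C(x)`. -/
noncomputable def cvde {n : ℕ} (P : Finset (EuclideanSpace ℝ (Fin n)))
    (K : EuclideanSpace ℝ (Fin n) → EuclideanSpace ℝ (Fin n) → ℝ)
    (x : EuclideanSpace ℝ (Fin n)) : ℝ :=
  K (nearest P x) x / (P.card * ∫ y in cell P (nearest P x), K (nearest P x) y)

section Aux

variable {n : ℕ}

lemma nearest_spec {P : Finset (EuclideanSpace ℝ (Fin n))} (hP : P.Nonempty)
    (x : EuclideanSpace ℝ (Fin n)) :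
    nearest P x ∈ P ∧ ∀ q ∈ P, dist x (nearest P x) ≤ dist x q := by
  rw [nearest, dif_pos hP]
  exact (P.exists_min_image (fun p => dist x p) hP).choose_spec

lemma isClosed_cell (P : Finset (EuclideanSpace ℝ (Fin n))) (p : EuclideanSpace ℝ (Fin n)) :
    IsClosed (cell P p) := by
  have h : cell P p = ⋂ q ∈ P, {x : EuclideanSpace ℝ (Fin n) | dist x p ≤ dist x q} := by
    ext x; simp [cell]
  rw [h]
  exact isClosed_biInter fun q _ =>
    isClosed_le (continuous_id.dist continuous_const) (continuous_id.dist continuous_const)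

lemma exists_ball_subset_cell (P : Finset (EuclideanSpace ℝ (Fin n)))
    (p : EuclideanSpace ℝ (Fin n)) : ∃ r > 0, ball p r ⊆ cell P p := by
  classical
  set T := insert (1 : ℝ) ((P.erase p).image fun q => dist p q / 2) with hT
  have hTne : T.Nonempty := Finset.insert_nonempty _ _
  refine ⟨T.min' hTne, ?_, ?_⟩
  · show (0:ℝ) < T.min' hTne
    rw [Finset.lt_min'_iff]
    intro y hy
    rcases Finset.mem_insert.mp hy with rfl | hy
    · norm_num
    · obtain ⟨q, hq, rfl⟩ := Finset.mem_image.mp hy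
      have hqp : q ≠ p := (Finset.mem_erase.mp hq).1
      have hd : (0 : ℝ) < dist p q := dist_pos.mpr fun h => hqp h.symm
      linarith
  · intro x hx q hq
    by_cases hqp : q = p
    · subst hqp; exact le_rfl
    · have hmem : dist p q / 2 ∈ T :=
        Finset.mem_insert_of_mem (Finset.mem_image_of_mem _ (Finset.mem_erase.mpr ⟨hqp, hq⟩))
      have hr : T.min' hTne ≤ dist p q / 2 := Finset.min'_le _ _ hmem
      rw [mem_ball] at hx
      have h1 : dist x p < dist p q / 2 := lt_of_lt_of_le hx hr
      have h2 : dist p q ≤ dist p x + dist x q := dist_triangle _ _ _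
      rw [dist_comm p x] at h2
      linarith

lemma ae_good (P : Finset (EuclideanSpace ℝ (Fin n))) :
    ∀ᵐ x : EuclideanSpace ℝ (Fin n) ∂volume,
      ∀ p ∈ P, ∀ q ∈ P, p ≠ q → dist x p ≠ dist x q := by
  rw [Filter.eventually_all_finset]
  intro p _
  rw [Filter.eventually_all_finset]
  intro q _
  by_cases hpq : p = q
  · exact Filter.Eventually.of_forall fun x h => absurd hpq h
  · have hnull : volume {x : EuclideanSpace ℝ (Fin n) | dist x p = dist x q} = 0 := by
      have hset : {x : EuclideanSpace ℝ (Fin n) | dist x p = dist x q}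
          = (AffineSubspace.perpBisector p q : Set (EuclideanSpace ℝ (Fin n))) := by
        ext x
        simp [AffineSubspace.mem_perpBisector_iff_dist_eq]
      rw [hset]
      exact Measure.addHaar_affineSubspace volume _ (by simpa using hpq)
    have h := measure_eq_zero_iff_ae_notMem.mp hnull
    filter_upwards [h] with x hx _
    exact hx

lemma cov (p : EuclideanSpace ℝ (Fin n)) {h : ℝ} (hh : 0 < h)
    (F : EuclideanSpace ℝ (Fin n) → ℝ) :
    ∫ x, F x = h ^ n * ∫ v, F (p - h • v) := by
  have e1 : ∫ x, F x ∂(volume : Measure (EuclideanSpace ℝ (Fin n)))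
      = ∫ u, F (p - u) ∂volume := (integral_sub_left_eq_self F volume p).symm
  have e2 : ∫ v, F (p - h • v) ∂(volume : Measure (EuclideanSpace ℝ (Fin n)))
      = |(h ^ Module.finrank ℝ (EuclideanSpace ℝ (Fin n)))⁻¹| • ∫ u, F (p - u) ∂volume :=
    Measure.integral_comp_smul volume (fun u => F (p - u)) h
  rw [finrank_euclideanSpace_fin] at e2
  have hpn : (0:ℝ) < h ^ n := by positivity
  rw [e1, e2, abs_of_nonneg (by positivity : (0:ℝ) ≤ (h ^ n)⁻¹), smul_eq_mul,
    ← mul_assoc, mul_inv_cancel₀ hpn.ne', one_mul]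


lemma ratio_tendsto (P : Finset (EuclideanSpace ℝ (Fin n)))
    {K : EuclideanSpace ℝ (Fin n) → ℝ} (hKcont : Continuous K) (hK0 : ∀ x, 0 ≤ K x)
    (hKint : Integrable K volume) (hKtot : 0 < ∫ u, K u)
    (φ : BoundedContinuousFunction (EuclideanSpace ℝ (Fin n)) ℝ)
    (p : EuclideanSpace ℝ (Fin n)) :
    Tendsto (fun h : ℝ =>
        (∫ x in cell P p, φ x * K (h⁻¹ • (p - x))) / (∫ y in cell P p, K (h⁻¹ • (p - y))))
      (nhdsWithin 0 (Set.Ioi 0)) (nhds (φ p)) := by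
  obtain ⟨r, hr, hball⟩ := exists_ball_subset_cell P p
  set S : ℝ → Set (EuclideanSpace ℝ (Fin n)) := fun h => {v | p - h • v ∈ cell P p} with hS
  have hSmeas : ∀ h : ℝ, MeasurableSet (S h) := fun h =>
    ((isClosed_cell P p).preimage (continuous_const.sub (continuous_id.const_smul h))).measurableSet
  have hSall : ∀ v : EuclideanSpace ℝ (Fin n), ∀ᶠ h in nhdsWithin (0:ℝ) (Set.Ioi 0), v ∈ S h := by
    intro v
    have hmem : Ioo (0:ℝ) (r / (‖v‖ + 1)) ∈ nhdsWithin (0:ℝ) (Set.Ioi 0) :=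
      Ioo_mem_nhdsGT_of_mem ⟨le_refl 0, by positivity⟩
    filter_upwards [hmem] with h hh
    have h0 : (0:ℝ) < h := hh.1
    apply hball
    rw [mem_ball, dist_eq_norm]
    have he : p - h • v - p = -(h • v) := by abel
    rw [he, norm_neg, norm_smul, Real.norm_eq_abs, abs_of_pos h0]
    calc h * ‖v‖ ≤ h * (‖v‖ + 1) := by nlinarith [norm_nonneg v]
      _ < r := (lt_div_iff₀ (by positivity)).mp hh.2
  have hcont2 : ∀ h : ℝ, Continuous fun v : EuclideanSpace ℝ (Fin n) => φ (p - h • v) :=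
    fun h => φ.continuous.comp (continuous_const.sub (continuous_id.const_smul h))
  have hB : Tendsto (fun h : ℝ => ∫ v, Set.indicator (S h) K v)
      (nhdsWithin (0:ℝ) (Set.Ioi 0)) (nhds (∫ v, K v)) := by
    apply tendsto_integral_filter_of_dominated_convergence K
    · exact Filter.Eventually.of_forall fun h =>
        (hKcont.aestronglyMeasurable).indicator (hSmeas h)
    · refine Filter.Eventually.of_forall fun h => Filter.Eventually.of_forall fun v => ?_
      by_cases hv : v ∈ S h
      · simp [Set.indicator_of_mem hv, Real.norm_eq_abs, abs_of_nonneg (hK0 v)]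
      · simp [Set.indicator_of_notMem hv, hK0 v]
    · exact hKint
    · refine Filter.Eventually.of_forall fun v => ?_
      apply Tendsto.congr' _ tendsto_const_nhds
      filter_upwards [hSall v] with h hv
      exact (Set.indicator_of_mem hv K).symm
  have hφt : ∀ v : EuclideanSpace ℝ (Fin n),
      Tendsto (fun h : ℝ => φ (p - h • v)) (nhdsWithin (0:ℝ) (Set.Ioi 0)) (nhds (φ p)) := by
    intro v
    have hc : Continuous fun h : ℝ => φ (p - h • v) :=
      φ.continuous.comp (continuous_const.sub (continuous_id.smul continuous_const))
    have ht : Tendsto (fun h : ℝ => φ (p - h • v)) (nhdsWithin (0:ℝ) (Set.Ioi 0))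
        (nhds (φ (p - (0:ℝ) • v))) := (hc.tendsto 0).mono_left nhdsWithin_le_nhds
    simpa using ht
  have hA : Tendsto (fun h : ℝ =>
        ∫ v, Set.indicator (S h) (fun v => φ (p - h • v) * K v) v)
      (nhdsWithin (0:ℝ) (Set.Ioi 0)) (nhds (∫ v, φ p * K v)) := by
    apply tendsto_integral_filter_of_dominated_convergence (fun v => ‖φ‖ * K v)
    · exact Filter.Eventually.of_forall fun h =>
        (((hcont2 h).mul hKcont).aestronglyMeasurable).indicator (hSmeas h)
    · refine Filter.Eventually.of_forall fun h => Filter.Eventually.of_forall fun v => ?_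
      by_cases hv : v ∈ S h
      · rw [Set.indicator_of_mem hv]
        rw [Real.norm_eq_abs, abs_mul, abs_of_nonneg (hK0 v)]
        have hb := φ.norm_coe_le_norm (p - h • v)
        rw [Real.norm_eq_abs] at hb
        exact mul_le_mul_of_nonneg_right hb (hK0 v)
      · rw [Set.indicator_of_notMem hv]
        simpa using mul_nonneg (norm_nonneg φ) (hK0 v)
    · exact hKint.const_mul ‖φ‖
    · refine Filter.Eventually.of_forall fun v => ?_
      apply Tendsto.congr' _ ((hφt v).mul tendsto_const_nhds)
      filter_upwards [hSall v] with h hv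
      exact (Set.indicator_of_mem hv (fun v => φ (p - h • v) * K v)).symm
  have hIK : (∫ v, φ p * K v) = φ p * ∫ v, K v := integral_const_mul _ _
  have hdiv : Tendsto (fun h : ℝ =>
        (∫ v, Set.indicator (S h) (fun v => φ (p - h • v) * K v) v)
          / (∫ v, Set.indicator (S h) K v))
      (nhdsWithin (0:ℝ) (Set.Ioi 0)) (nhds (φ p)) := by
    have ht := hA.div hB hKtot.ne'
    rw [hIK, mul_div_assoc, div_self hKtot.ne', mul_one] at ht
    exact ht
  apply Tendsto.congr' _ hdiv
  filter_upwards [self_mem_nhdsWithin] with h hh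
  have hh0 : (0:ℝ) < h := hh
  have hnum : ∫ x in cell P p, φ x * K (h⁻¹ • (p - x))
      = h ^ n * ∫ v, Set.indicator (S h) (fun v => φ (p - h • v) * K v) v := by
    rw [← integral_indicator (isClosed_cell P p).measurableSet,
      cov p hh0 (Set.indicator (cell P p) (fun x => φ x * K (h⁻¹ • (p - x))))]
    congr 1
    apply integral_congr_ae
    apply Filter.Eventually.of_forall
    intro v
    show Set.indicator (cell P p) (fun x => φ x * K (h⁻¹ • (p - x))) (p - h • v)
        = Set.indicator (S h) (fun v => φ (p - h • v) * K v) v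
    by_cases hv : p - h • v ∈ cell P p
    · rw [Set.indicator_of_mem hv, Set.indicator_of_mem (show v ∈ S h from hv)]
      have he : p - (p - h • v) = h • v := by abel
      rw [he, inv_smul_smul₀ hh0.ne']
    · rw [Set.indicator_of_notMem hv, Set.indicator_of_notMem (show v ∉ S h from hv)]
  have hden : ∫ y in cell P p, K (h⁻¹ • (p - y))
      = h ^ n * ∫ v, Set.indicator (S h) K v := by
    rw [← integral_indicator (isClosed_cell P p).measurableSet,
      cov p hh0 (Set.indicator (cell P p) (fun x => K (h⁻¹ • (p - x))))]
    congr 1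
    apply integral_congr_ae
    apply Filter.Eventually.of_forall
    intro v
    show Set.indicator (cell P p) (fun x => K (h⁻¹ • (p - x))) (p - h • v)
        = Set.indicator (S h) K v
    by_cases hv : p - h • v ∈ cell P p
    · rw [Set.indicator_of_mem hv, Set.indicator_of_mem (show v ∈ S h from hv)]
      have he : p - (p - h • v) = h • v := by abel
      rw [he, inv_smul_smul₀ hh0.ne']
    · rw [Set.indicator_of_notMem hv, Set.indicator_of_notMem (show v ∉ S h from hv)]
  rw [hnum, hden, mul_div_mul_left _ _ (pow_ne_zero n hh0.ne')]

end Aux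

/-- as `h → 0⁺`, the CVDE measures `f_h dx` built with the rescaled kernel
`K_h(p,x) = K((p−x)/h)` converge weakly (i.e. tested against every bounded continuous
function) to the empirical measure `(1/|P|) Σ_{p∈P} δ_p`. -/
theorem cvde_tendsto_empirical_of_bandwidth_zero {n : ℕ}
    (P : Finset (EuclideanSpace ℝ (Fin n))) (hP : P.Nonempty)
    (K : EuclideanSpace ℝ (Fin n) → ℝ)
    (hKcont : Continuous K) (hK0 : ∀ x, 0 ≤ K x) (hKint : Integrable K volume)
    (hK00 : 0 < K 0) (hKtot : 0 < ∫ u, K u) :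
    ∀ φ : BoundedContinuousFunction (EuclideanSpace ℝ (Fin n)) ℝ,
      Tendsto (fun h : ℝ =>
          ∫ x, φ x ∂(volume.withDensity fun x =>
            ENNReal.ofReal (cvde P (fun p y => K (h⁻¹ • (p - y))) x)))
        (nhdsWithin 0 (Set.Ioi 0))
        (nhds ((1 / P.card) * ∑ p ∈ P, φ p)) := by
  intro φ
  classical
  have key : ∀ᶠ h in nhdsWithin (0:ℝ) (Set.Ioi 0),
      (∫ x, φ x ∂(volume.withDensity fun x =>
          ENNReal.ofReal (cvde P (fun p y => K (h⁻¹ • (p - y))) x)))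
        = ∑ p ∈ P, (∫ x in cell P p, φ x * K (h⁻¹ • (p - x)))
            / ((P.card : ℝ) * ∫ y in cell P p, K (h⁻¹ • (p - y))) := by
    filter_upwards [self_mem_nhdsWithin] with h hh
    have hh0 : (0:ℝ) < h := hh
    have hKhcont : ∀ p : EuclideanSpace ℝ (Fin n),
        Continuous fun x : EuclideanSpace ℝ (Fin n) => K (h⁻¹ • (p - x)) := fun p =>
      hKcont.comp ((continuous_const.sub continuous_id).const_smul h⁻¹)
    have hKhint : ∀ p : EuclideanSpace ℝ (Fin n),
        Integrable (fun x => K (h⁻¹ • (p - x))) volume := by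
      intro p
      have h1 : Integrable (fun y : EuclideanSpace ℝ (Fin n) => K (h⁻¹ • y)) volume :=
        (integrable_comp_smul_iff volume K (inv_ne_zero hh0.ne')).mpr hKint
      exact h1.comp_sub_left p
    have hψmeas : Measurable fun x : EuclideanSpace ℝ (Fin n) => ∑ p ∈ P,
        Set.indicator (cell P p)
          (fun x => K (h⁻¹ • (p - x))
            / ((P.card : ℝ) * ∫ y in cell P p, K (h⁻¹ • (p - y)))) x := by
      apply Finset.measurable_sum
      intro p _
      exact (((hKhcont p).measurable).div_const _).indicator (isClosed_cell P p).measurableSet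
    have hae : (fun x => cvde P (fun p y => K (h⁻¹ • (p - y))) x) =ᵐ[volume]
        (fun x => ∑ p ∈ P, Set.indicator (cell P p)
          (fun x => K (h⁻¹ • (p - x))
            / ((P.card : ℝ) * ∫ y in cell P p, K (h⁻¹ • (p - y)))) x) := by
      filter_upwards [ae_good P] with x hx
      obtain ⟨hp0, hmin⟩ := nearest_spec hP x
      have hxc : x ∈ cell P (nearest P x) := fun q hq => hmin q hq
      have hnot : ∀ q ∈ P, q ≠ nearest P x → x ∉ cell P q := by
        intro q hq hne hxq
        have h1 : dist x (nearest P x) ≤ dist x q := hmin q hq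
        have h2 : dist x q ≤ dist x (nearest P x) := hxq (nearest P x) hp0
        exact hx q hq (nearest P x) hp0 hne (le_antisymm h2 h1)
      rw [Finset.sum_eq_single_of_mem (nearest P x) hp0 (fun q hq hne =>
        Set.indicator_of_notMem (hnot q hq hne) _),
        Set.indicator_of_mem hxc]
      rfl
    have hcv0 : ∀ x, 0 ≤ cvde P (fun p y => K (h⁻¹ • (p - y))) x := fun x =>
      div_nonneg (hK0 _) (mul_nonneg (Nat.cast_nonneg _) (integral_nonneg fun y => hK0 _))
    have haem : AEMeasurable
        (fun x => (cvde P (fun p y => K (h⁻¹ • (p - y))) x).toNNReal) volume := by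
      refine (measurable_real_toNNReal.comp hψmeas).aemeasurable.congr ?_
      exact (hae.fun_comp Real.toNNReal).symm
    have h1 : (∫ x, φ x ∂(volume.withDensity fun x =>
          ENNReal.ofReal (cvde P (fun p y => K (h⁻¹ • (p - y))) x)))
        = ∫ x, cvde P (fun p y => K (h⁻¹ • (p - y))) x * φ x := by
      have hdd : (fun x => ENNReal.ofReal (cvde P (fun p y => K (h⁻¹ • (p - y))) x))
          = fun x => ((cvde P (fun p y => K (h⁻¹ • (p - y))) x).toNNReal : ENNReal) := rfl
      rw [hdd, integral_withDensity_eq_integral_smul₀ haem (fun x => φ x)]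
      apply integral_congr_ae
      apply Filter.Eventually.of_forall
      intro x
      simp [NNReal.smul_def, Real.coe_toNNReal _ (hcv0 x)]
    have haeφ : (fun x => cvde P (fun p y => K (h⁻¹ • (p - y))) x * φ x) =ᵐ[volume]
        (fun x => ∑ p ∈ P, Set.indicator (cell P p)
          (fun x => φ x * (K (h⁻¹ • (p - x))
            / ((P.card : ℝ) * ∫ y in cell P p, K (h⁻¹ • (p - y))))) x) := by
      filter_upwards [hae] with x hx
      rw [hx, Finset.sum_mul]
      apply Finset.sum_congr rfl
      intro p _
      by_cases hxp : x ∈ cell P p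
      · rw [Set.indicator_of_mem hxp, Set.indicator_of_mem hxp]
        ring
      · rw [Set.indicator_of_notMem hxp, Set.indicator_of_notMem hxp, zero_mul]
    have hint : ∀ p ∈ P, Integrable (Set.indicator (cell P p)
        (fun x => φ x * (K (h⁻¹ • (p - x))
          / ((P.card : ℝ) * ∫ y in cell P p, K (h⁻¹ • (p - y)))))) volume := by
      intro p _
      refine Integrable.indicator ?_ (isClosed_cell P p).measurableSet
      exact ((hKhint p).div_const _).bdd_mul φ.continuous.aestronglyMeasurable
        (Filter.Eventually.of_forall fun x => φ.norm_coe_le_norm x)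
    rw [h1, integral_congr_ae haeφ, integral_finset_sum _ hint]
    apply Finset.sum_congr rfl
    intro p _
    rw [integral_indicator (isClosed_cell P p).measurableSet]
    simp_rw [← mul_div_assoc]
    rw [integral_div]
  have hsum : Tendsto (fun h : ℝ => ∑ p ∈ P,
      (∫ x in cell P p, φ x * K (h⁻¹ • (p - x)))
        / ((P.card : ℝ) * ∫ y in cell P p, K (h⁻¹ • (p - y))))
      (nhdsWithin (0:ℝ) (Set.Ioi 0)) (nhds ((1 / (P.card : ℝ)) * ∑ p ∈ P, φ p)) := by
    have htarget : (1 / (P.card : ℝ)) * ∑ p ∈ P, φ p = ∑ p ∈ P, φ p / (P.card : ℝ) := by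
      rw [Finset.mul_sum]
      exact Finset.sum_congr rfl fun p _ => by ring
    rw [htarget]
    apply tendsto_finset_sum
    intro p _
    have ht := (ratio_tendsto P hKcont hK0 hKint hKtot φ p).div_const (P.card : ℝ)
    apply Tendsto.congr _ ht
    intro h
    ring
  exact Tendsto.congr' (key.mono fun h hh => hh.symm) hsum
end
end

section
/- Let P ⊆ ℝⁿ be a finite set of distinct generators and K : ℝⁿ × ℝⁿ → ℝ≥0 a kernel with K(p,·) integrable for every p and vol_p(C(p)) = ∫_{C(p)} K(p,y) dy strictly positive for every p ∈ P. Then the CVDE f is a probability density: ∫_{ℝⁿ} f(x) dx = 1. Moreover, under the measure f dx each Voronoi cell has mass exactly 1/|P|: ∫_{C(p)} f(x) dx = 1/|P| for every p ∈ P. -/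
open MeasureTheory Metric Set

noncomputable section

variable {n : ℕ}

local notation "E" => EuclideanSpace ℝ (Fin n)

lemma measurableSet_cell (P : Finset E) (p : E) : MeasurableSet (cell P p) := by
  have : cell P p = ⋂ q ∈ P, {x : E | dist x p ≤ dist x q} := by
    ext x; simp [cell]
  rw [this]
  exact MeasurableSet.biInter P.countable_toSet fun q _ =>
    (isClosed_le (continuous_id.dist continuous_const)
      (continuous_id.dist continuous_const)).measurableSet

lemma nearest_mem (P : Finset E) (hP : P.Nonempty) (x : E) : nearest P x ∈ P := by
  rw [nearest, dif_pos hP]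
  exact (P.exists_min_image (fun p => dist x p) hP).choose_spec.1

lemma nearest_le (P : Finset E) (hP : P.Nonempty) (x : E) {q : E} (hq : q ∈ P) :
    dist x (nearest P x) ≤ dist x q := by
  rw [nearest, dif_pos hP]
  exact (P.exists_min_image (fun p => dist x p) hP).choose_spec.2 q hq

lemma mem_cell_nearest (P : Finset E) (hP : P.Nonempty) (x : E) :
    x ∈ cell P (nearest P x) := fun q hq => nearest_le P hP x hq

def badSet (P : Finset E) : Set E :=
  ⋃ p ∈ P, ⋃ q ∈ P, {x : E | p ≠ q ∧ dist x p = dist x q}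

lemma badSet_null (P : Finset E) : volume (badSet P) = 0 := by
  refine (measure_biUnion_null_iff P.countable_toSet).2 fun p _ => ?_
  refine (measure_biUnion_null_iff P.countable_toSet).2 fun q _ => ?_
  rcases eq_or_ne p q with rfl | hpq
  · have h : {x : E | p ≠ p ∧ dist x p = dist x p} = (∅ : Set E) := by ext x; simp
    rw [h]; exact measure_empty
  · refine measure_mono_null (fun x hx => ?_)
      (Measure.addHaar_affineSubspace volume (AffineSubspace.perpBisector p q) ?_)
    · exact AffineSubspace.mem_perpBisector_iff_dist_eq.2 hx.2
    · simpa using hpq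

lemma measurableSet_badSet (P : Finset E) : MeasurableSet (badSet P) := by
  refine MeasurableSet.biUnion P.countable_toSet fun p _ =>
    MeasurableSet.biUnion P.countable_toSet fun q _ => ?_
  rcases eq_or_ne p q with rfl | hpq
  · have h : {x : E | p ≠ p ∧ dist x p = dist x p} = (∅ : Set E) := by ext x; simp
    rw [h]; exact MeasurableSet.empty
  · have h : {x : E | p ≠ q ∧ dist x p = dist x q} = {x : E | dist x p = dist x q} := by
      ext x; simp [hpq]
    rw [h]
    exact (isClosed_eq (continuous_id.dist continuous_const)
      (continuous_id.dist continuous_const)).measurableSet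

lemma nearest_eq (P : Finset E) (hP : P.Nonempty) {p x : E} (hp : p ∈ P)
    (hx : x ∈ cell P p) (hxN : x ∉ badSet P) : nearest P x = p := by
  by_contra h
  exact hxN <| mem_biUnion (nearest_mem P hP x) <| mem_biUnion hp
    ⟨h, le_antisymm (nearest_le P hP x hp) (hx _ (nearest_mem P hP x))⟩

/-- the CVDE is a probability density (`∫ f = 1`) and gives each Voronoi
cell mass exactly `1/|P|`. -/
theorem cvde_integral_one_and_cells_equally_likely {n : ℕ}
    (P : Finset (EuclideanSpace ℝ (Fin n))) (hP : P.Nonempty)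
    (K : EuclideanSpace ℝ (Fin n) → EuclideanSpace ℝ (Fin n) → ℝ)
    (hK0 : ∀ p x, 0 ≤ K p x)
    (hKmeas : Measurable fun q : EuclideanSpace ℝ (Fin n) × EuclideanSpace ℝ (Fin n) =>
      K q.1 q.2)
    (hKint : ∀ p, Integrable (K p) volume)
    (hvolpos : ∀ p ∈ P, 0 < ∫ y in cell P p, K p y) :
    (∫ x, cvde P K x = 1) ∧
    ∀ p ∈ P, (∫ x in cell P p, cvde P K x) = 1 / P.card := by
  classical
  have hN0 : volume (badSet P) = 0 := badSet_null P
  have haeN : ∀ᵐ x : EuclideanSpace ℝ (Fin n), x ∉ badSet P := by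
    rw [ae_iff]; simpa using hN0
  have hcard : (0:ℝ) < P.card := by exact_mod_cast Finset.card_pos.mpr hP
  have hcell : ∀ p ∈ P, (∫ x in cell P p, cvde P K x) = 1 / P.card := by
    intro p hp
    have hc : ∫ x in cell P p, cvde P K x
        = ∫ x in cell P p, K p x / (P.card * ∫ y in cell P p, K p y) := by
      refine setIntegral_congr_ae (measurableSet_cell P p) ?_
      filter_upwards [haeN] with x hx hxc
      rw [cvde, nearest_eq P hP hp hxc hx]
    rw [hc, integral_div, mul_comm,
      div_eq_div_iff (mul_pos (hvolpos p hp) hcard).ne' hcard.ne', one_mul]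
  have hint : ∀ p ∈ P, IntegrableOn (cvde P K) (cell P p) := by
    intro p hp
    have h1 : IntegrableOn (fun x => K p x / (P.card * ∫ y in cell P p, K p y))
        (cell P p) := ((hKint p).div_const _).integrableOn
    refine h1.congr ?_
    filter_upwards [ae_restrict_mem (measurableSet_cell P p),
      haeN.filter_mono (ae_mono Measure.restrict_le_self)] with x hxc hx
    rw [cvde, nearest_eq P hP hp hxc hx]
  refine ⟨?_, hcell⟩
  set s : EuclideanSpace ℝ (Fin n) → Set (EuclideanSpace ℝ (Fin n)) := fun p => cell P p \ badSet P with hs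
  have hs_meas : ∀ p ∈ P, MeasurableSet (s p) := fun p _ =>
    (measurableSet_cell P p).diff (measurableSet_badSet P)
  have hdisj : Set.Pairwise ↑P (Function.onFun Disjoint s) := by
    intro p hp q hq hpq
    rw [Function.onFun, Set.disjoint_left]
    rintro x ⟨hxp, hxN⟩ ⟨hxq, -⟩
    exact hxN <| mem_biUnion hp <| mem_biUnion hq
      ⟨hpq, le_antisymm (hxp q hq) (hxq p hp)⟩
  have hunion : (univ : Set (EuclideanSpace ℝ (Fin n))) =ᵐ[volume] ⋃ p ∈ P, s p := by
    rw [ae_eq_set]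
    constructor
    · refine measure_mono_null (fun x hx => ?_) hN0
      by_contra hxN
      exact hx.2 <| mem_biUnion (nearest_mem P hP x) ⟨mem_cell_nearest P hP x, hxN⟩
    · rw [diff_eq_empty.mpr (subset_univ _)]; exact measure_empty
  have hseq : ∀ p ∈ P, s p =ᵐ[volume] cell P p := by
    intro p hp
    rw [ae_eq_set]
    constructor
    · rw [diff_eq_empty.mpr diff_subset]; exact measure_empty
    · refine measure_mono_null (fun x hx => ?_) hN0
      by_contra hxN
      exact hx.2 ⟨hx.1, hxN⟩
  calc ∫ x, cvde P K x = ∫ x in univ, cvde P K x := by rw [setIntegral_univ]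
    _ = ∫ x in ⋃ p ∈ P, s p, cvde P K x := by rw [Measure.restrict_congr_set hunion]
    _ = ∑ p ∈ P, ∫ x in s p, cvde P K x := by
        refine integral_biUnion_finset P hs_meas hdisj fun p hp =>
          (hint p hp).mono_set diff_subset
    _ = ∑ p ∈ P, ∫ x in cell P p, cvde P K x := by
        refine Finset.sum_congr rfl fun p hp => ?_
        rw [Measure.restrict_congr_set (hseq p hp)]
    _ = ∑ p ∈ P, (1 / P.card : ℝ) := Finset.sum_congr rfl hcell
    _ = 1 := by
        rw [Finset.sum_const, nsmul_eq_mul, mul_one_div, div_self hcard.ne']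
end
end
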